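/- Let 𝒜 ⊆ M_n(ℝ) be a unital matrix algebra. The following are equivalent: (1) 𝒜 contains a nonnegative matrix A with Ω(A) = Ω(𝒜); (2) 𝒜 is generated (as a unital algebra) by a set of entrywise nonnegative matrices; (3) 𝒜 has a vector-space basis consisting of entrywise nonnegative matrices. -/

import Mathlib

open Matrix

private lemma entry_nonneg_of_mem_closure {n : ℕ} {S : Set (Matrix (Fin n) (Fin n) ℝ)}
    (hS : ∀ A ∈ S, ∀ i j, 0 ≤ A i j) {w : Matrix (Fin n) (Fin n) ℝ}
    (hw : w ∈ Submonoid.closure S) : ∀ i j, 0 ≤ w i j := by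
  induction hw using Submonoid.closure_induction with
  | mem x hx => exact hS x hx
  | one => intro i j; rw [Matrix.one_apply]; split <;> norm_num
  | mul x y _ _ hx hy =>
      intro i j
      rw [Matrix.mul_apply]
      exact Finset.sum_nonneg fun k _ => mul_nonneg (hx i k) (hy k j)

private def evalLM {n : ℕ} (i j : Fin n) : Matrix (Fin n) (Fin n) ℝ →ₗ[ℝ] ℝ where
  toFun X := X i j
  map_add' := fun _ _ => rfl
  map_smul' := fun _ _ => rfl

/-- (2) → (1) -/
private lemma two_to_one {n : ℕ} (𝒜 : Subalgebra ℝ (Matrix (Fin n) (Fin n) ℝ))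
    (h : ∃ S : Set (Matrix (Fin n) (Fin n) ℝ), (∀ A ∈ S, ∀ i j, 0 ≤ A i j) ∧
      Algebra.adjoin ℝ S = 𝒜) :
    ∃ A ∈ 𝒜, (∀ i j, 0 ≤ A i j) ∧ ∀ i j, (∃ X ∈ 𝒜, X i j ≠ 0) → A i j ≠ 0 := by
  classical
  obtain ⟨S, hS, hadj⟩ := h
  have hMnn : ∀ w ∈ Submonoid.closure S, ∀ i j, 0 ≤ w i j :=
    fun w hw => entry_nonneg_of_mem_closure hS hw
  have hM𝒜 : ∀ w ∈ Submonoid.closure S, w ∈ 𝒜 := by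
    intro w hw
    rw [← hadj]
    induction hw using Submonoid.closure_induction with
    | mem x hx => exact Algebra.subset_adjoin hx
    | one => exact one_mem _
    | mul x y _ _ hx hy => exact mul_mem hx hy
  have hspan : ∀ X ∈ 𝒜, X ∈ Submodule.span ℝ ((Submonoid.closure S : Submonoid _) : Set _) := by
    intro X hX
    rw [← hadj] at hX
    have : X ∈ Subalgebra.toSubmodule (Algebra.adjoin ℝ S) := hX
    rwa [Algebra.adjoin_eq_span] at this
  have key : ∀ i j, (∃ X ∈ 𝒜, X i j ≠ 0) → ∃ w ∈ Submonoid.closure S, w i j ≠ 0 := by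
    rintro i j ⟨X, hX, hXij⟩
    by_contra hc
    push_neg at hc
    apply hXij
    have hle : Submodule.span ℝ ((Submonoid.closure S : Submonoid _) : Set _) ≤
        LinearMap.ker (evalLM i j) := by
      rw [Submodule.span_le]
      intro w hw
      exact hc w hw
    exact hle (hspan X hX)
  set g : Fin n × Fin n → Matrix (Fin n) (Fin n) ℝ := fun p =>
    if hp : ∃ w ∈ Submonoid.closure S, w p.1 p.2 ≠ 0 then hp.choose else 1 with hg
  have hgM : ∀ p, g p ∈ Submonoid.closure S := by
    intro p
    rw [hg]
    dsimp only
    split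
    · next hp => exact hp.choose_spec.1
    · exact one_mem _
  refine ⟨∑ p, g p, sum_mem fun p _ => hM𝒜 _ (hgM p), ?_, ?_⟩
  · intro i j
    rw [Matrix.sum_apply]
    exact Finset.sum_nonneg fun p _ => hMnn _ (hgM p) i j
  · intro i j hx
    have h' := key i j hx
    have hpos : 0 < (∑ p, g p) i j := by
      rw [Matrix.sum_apply]
      refine Finset.sum_pos' (fun p _ => hMnn _ (hgM p) i j) ⟨(i, j), Finset.mem_univ _, ?_⟩
      have : g (i, j) = h'.choose := by rw [hg]; exact dif_pos h'
      rw [this]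
      exact lt_of_le_of_ne (hMnn _ h'.choose_spec.1 i j) (Ne.symm h'.choose_spec.2)
    exact ne_of_gt hpos

/-- (3) → (2) -/
private lemma three_to_two {n : ℕ} (𝒜 : Subalgebra ℝ (Matrix (Fin n) (Fin n) ℝ))
    (h : ∃ S : Set (Matrix (Fin n) (Fin n) ℝ), (∀ A ∈ S, ∀ i j, 0 ≤ A i j) ∧
        LinearIndependent ℝ ((↑) : S → Matrix (Fin n) (Fin n) ℝ) ∧
        Submodule.span ℝ S = Subalgebra.toSubmodule 𝒜) :
    ∃ S : Set (Matrix (Fin n) (Fin n) ℝ), (∀ A ∈ S, ∀ i j, 0 ≤ A i j) ∧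
      Algebra.adjoin ℝ S = 𝒜 := by
  obtain ⟨S, hS, _, hspan⟩ := h
  refine ⟨S, hS, le_antisymm ?_ ?_⟩
  · rw [Algebra.adjoin_le_iff]
    intro x hx
    have : x ∈ Submodule.span ℝ S := Submodule.subset_span hx
    rw [hspan] at this
    exact this
  · intro x hx
    have hx' : x ∈ Submodule.span ℝ S := by rw [hspan]; exact hx
    have : Submodule.span ℝ S ≤ Subalgebra.toSubmodule (Algebra.adjoin ℝ S) :=
      Submodule.span_le.mpr Algebra.subset_adjoin
    exact this hx'

/-- (1) → (3) -/
private lemma one_to_three {n : ℕ} (𝒜 : Subalgebra ℝ (Matrix (Fin n) (Fin n) ℝ))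
    (h : ∃ A ∈ 𝒜, (∀ i j, 0 ≤ A i j) ∧ ∀ i j, (∃ X ∈ 𝒜, X i j ≠ 0) → A i j ≠ 0) :
    ∃ S : Set (Matrix (Fin n) (Fin n) ℝ), (∀ A ∈ S, ∀ i j, 0 ≤ A i j) ∧
      LinearIndependent ℝ ((↑) : S → Matrix (Fin n) (Fin n) ℝ) ∧
      Submodule.span ℝ S = Subalgebra.toSubmodule 𝒜 := by
  classical
  obtain ⟨A, hA𝒜, hAnn, hcov⟩ := h
  rcases Nat.eq_zero_or_pos n with hn | hn
  · subst hn
    haveI : Subsingleton (Matrix (Fin 0) (Fin 0) ℝ) := ⟨fun a b => by ext i j; exact i.elim0⟩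
    refine ⟨∅, by simp, linearIndependent_empty _ _, ?_⟩
    ext x
    have hx0 : x = 0 := Subsingleton.elim x 0
    subst hx0
    simp
  · set V := Subalgebra.toSubmodule 𝒜 with hV
    have hApos0 : A ⟨0, hn⟩ ⟨0, hn⟩ ≠ 0 :=
      hcov _ _ ⟨1, one_mem _, by rw [Matrix.one_apply_eq]; norm_num⟩
    set a : V := ⟨A, hA𝒜⟩ with ha
    have ha0 : a ≠ 0 := by
      intro hh
      apply hApos0
      have hA0 : A = 0 := congrArg Subtype.val hh
      rw [hA0]
      rfl
    have hshift : ∀ X : V, ∃ r : ℝ, ∀ i j, 0 ≤ (X : Matrix (Fin n) (Fin n) ℝ) i j + r * A i j := by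
      intro X
      refine ⟨∑ p : Fin n × Fin n, if A p.1 p.2 = 0 then 0 else
        |(X : Matrix (Fin n) (Fin n) ℝ) p.1 p.2| / A p.1 p.2, ?_⟩
      intro i j
      by_cases hA0 : A i j = 0
      · have hX0 : (X : Matrix (Fin n) (Fin n) ℝ) i j = 0 := by
          by_contra hne
          exact hcov i j ⟨X, X.2, hne⟩ hA0
        rw [hX0, hA0, mul_zero, add_zero]
      · have hApos : 0 < A i j := lt_of_le_of_ne (hAnn i j) (Ne.symm hA0)
        have hterm : |(X : Matrix (Fin n) (Fin n) ℝ) i j| / A i j ≤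
            ∑ p : Fin n × Fin n, if A p.1 p.2 = 0 then 0 else
              |(X : Matrix (Fin n) (Fin n) ℝ) p.1 p.2| / A p.1 p.2 := by
          have hmem := Finset.single_le_sum
            (f := fun p : Fin n × Fin n => if A p.1 p.2 = 0 then 0 else
              |(X : Matrix (Fin n) (Fin n) ℝ) p.1 p.2| / A p.1 p.2)
            (fun p _ => by
              split
              · exact le_rfl
              · exact div_nonneg (abs_nonneg _) (hAnn _ _)) (Finset.mem_univ (i, j))
          simpa [hA0] using hmem
        rw [div_le_iff₀ hApos] at hterm
        have hnab := neg_abs_le ((X : Matrix (Fin n) (Fin n) ℝ) i j)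
        nlinarith
    have hs : LinearIndepOn ℝ id ({a} : Set V) := (linearIndepOn_singleton_iff ℝ).mpr ha0
    let b : Module.Basis _ ℝ V := Module.Basis.extend hs
    have haT : a ∈ hs.extend (Set.subset_univ _) := hs.subset_extend _ rfl
    let c : hs.extend (Set.subset_univ _) → ℝ :=
      fun t => if (t : V) = a then 0 else (hshift (t : V)).choose
    let ℓ : V →ₗ[ℝ] ℝ := Module.Basis.constr b ℝ c
    have hℓb : ∀ t, ℓ (b t) = c t := fun t => Module.Basis.constr_basis b ℝ c t
    have hba : b ⟨a, haT⟩ = a := Module.Basis.extend_apply_self hs ⟨a, haT⟩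
    have hℓa : ℓ a = 0 := by
      rw [← hba, hℓb]
      exact if_pos rfl
    let f : V →ₗ[ℝ] V := LinearMap.id + LinearMap.smulRight ℓ a
    let fg : V →ₗ[ℝ] V := LinearMap.id - LinearMap.smulRight ℓ a
    have hfg : f.comp fg = LinearMap.id := by
      apply LinearMap.ext
      intro x
      show (x - ℓ x • a) + ℓ (x - ℓ x • a) • a = x
      rw [map_sub, LinearMap.map_smul, hℓa, smul_eq_mul, mul_zero, sub_zero]
      abel
    have hgf : fg.comp f = LinearMap.id := by
      apply LinearMap.ext
      intro x
      show (x + ℓ x • a) - ℓ (x + ℓ x • a) • a = x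
      rw [map_add, LinearMap.map_smul, hℓa, smul_eq_mul, mul_zero, add_zero]
      abel
    let e : V ≃ₗ[ℝ] V := LinearEquiv.ofLinear f fg hfg hgf
    let F : hs.extend (Set.subset_univ _) → Matrix (Fin n) (Fin n) ℝ :=
      fun t => ((e (b t) : V) : Matrix (Fin n) (Fin n) ℝ)
    have hFval : ∀ t, F t = ((t : V) : Matrix (Fin n) (Fin n) ℝ) + c t • A := by
      intro t
      have hbt : b t = (t : V) := Module.Basis.extend_apply_self hs t
      have he : e (b t) = b t + c t • a := by
        show b t + ℓ (b t) • a = b t + c t • a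
        rw [hℓb]
      show ((e (b t) : V) : Matrix (Fin n) (Fin n) ℝ) = _
      rw [he, hbt]
      rfl
    have hinj : LinearMap.ker (V.subtype.comp (e.toLinearMap)) = ⊥ :=
      LinearMap.ker_eq_bot.mpr ((Submodule.injective_subtype V).comp e.injective)
    have hliF : LinearIndependent ℝ F :=
      (b.linearIndependent).map' (V.subtype.comp (e.toLinearMap)) hinj
    have hspanF : Submodule.span ℝ (Set.range F) = V := by
      have h1 : Set.range F = (V.subtype.comp (e.toLinearMap)) '' (Set.range ⇑b) := by
        rw [← Set.range_comp]
        rfl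
      rw [h1, Submodule.span_image, b.span_eq, Submodule.map_top, LinearMap.range_comp,
        LinearEquiv.range, Submodule.map_top, Submodule.range_subtype]
    refine ⟨Set.range F, ?_, hliF.linearIndepOn_id, hspanF⟩
    rintro B ⟨t, rfl⟩ i j
    rw [hFval]
    by_cases ht : (t : V) = a
    · have hc0 : c t = 0 := if_pos ht
      rw [hc0, zero_smul, add_zero, ht]
      exact hAnn i j
    · have hc : c t = (hshift (t : V)).choose := if_neg ht
      rw [hc]
      have hspec := (hshift (t : V)).choose_spec i j
      simpa [Matrix.add_apply, Matrix.smul_apply, smul_eq_mul] using hspec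

/-- For a unital matrix algebra `𝒜 ⊆ Mₙ(ℝ)`, TFAE: (1) `𝒜` has a nonnegative covering
matrix; (2) `𝒜` is generated by a set of nonnegative matrices; (3) `𝒜` has a basis of
nonnegative matrices. -/
theorem stmt4 (n : ℕ) (𝒜 : Subalgebra ℝ (Matrix (Fin n) (Fin n) ℝ)) :
    ((∃ A ∈ 𝒜, (∀ i j, 0 ≤ A i j) ∧ ∀ i j, (∃ X ∈ 𝒜, X i j ≠ 0) → A i j ≠ 0) ↔
      (∃ S : Set (Matrix (Fin n) (Fin n) ℝ), (∀ A ∈ S, ∀ i j, 0 ≤ A i j) ∧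
        Algebra.adjoin ℝ S = 𝒜)) ∧
    ((∃ S : Set (Matrix (Fin n) (Fin n) ℝ), (∀ A ∈ S, ∀ i j, 0 ≤ A i j) ∧
        Algebra.adjoin ℝ S = 𝒜) ↔
      (∃ S : Set (Matrix (Fin n) (Fin n) ℝ), (∀ A ∈ S, ∀ i j, 0 ≤ A i j) ∧
        LinearIndependent ℝ ((↑) : S → Matrix (Fin n) (Fin n) ℝ) ∧
        Submodule.span ℝ S = Subalgebra.toSubmodule 𝒜)) := by
  constructor
  · exact ⟨fun h1 => three_to_two 𝒜 (one_to_three 𝒜 h1), fun h2 => two_to_one 𝒜 h2⟩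
  · exact ⟨fun h2 => one_to_three 𝒜 (two_to_one 𝒜 h2), fun h3 => three_to_two 𝒜 h3⟩
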